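/- Let M be a K_par(G)-module and d : G → M a map satisfying e_g·d(gh) = [g]·d(h) + e_{gh}·d(g) for all g,h ∈ G. Then d(1_G) = 0 and d(g) = -[g]·d(g⁻¹), whence d(g) = e_g·d(g) for all g ∈ G. -/
import Mathlib



/-- A concrete model of Exel's inverse monoid `S(G)`: pairs `(E, g)` where `E` is a
finite subset of `G` containing `1` and `g`, with product `(E,g)(F,h) = (E ∪ gF, gh)`. -/
@[ext]
structure ExelS (G : Type*) [Group G] [DecidableEq G] where
  carrier : Finset G
  elt : G
  one_mem : (1 : G) ∈ carrier
  elt_mem : elt ∈ carrier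

namespace ExelS

variable {G : Type*} [Group G] [DecidableEq G]

instance : Mul (ExelS G) :=
  ⟨fun s t =>
    ⟨s.carrier ∪ t.carrier.image (s.elt * ·), s.elt * t.elt,
      Finset.mem_union_left _ s.one_mem,
      Finset.mem_union_right _ (Finset.mem_image_of_mem _ t.elt_mem)⟩⟩

instance : One (ExelS G) :=
  ⟨⟨{1}, 1, Finset.mem_singleton_self 1, Finset.mem_singleton_self 1⟩⟩

/-- The inverse in the inverse monoid `S(G)`. -/
instance : Inv (ExelS G) :=
  ⟨fun s =>
    ⟨s.carrier.image (s.elt⁻¹ * ·), s.elt⁻¹,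
      Finset.mem_image.2 ⟨s.elt, s.elt_mem, by simp⟩,
      Finset.mem_image.2 ⟨1, s.one_mem, by simp⟩⟩⟩

@[simp] lemma mul_carrier (s t : ExelS G) :
    (s * t).carrier = s.carrier ∪ t.carrier.image (s.elt * ·) := rfl

@[simp] lemma mul_elt (s t : ExelS G) : (s * t).elt = s.elt * t.elt := rfl

@[simp] lemma one_carrier : (1 : ExelS G).carrier = {1} := rfl

@[simp] lemma one_elt : (1 : ExelS G).elt = 1 := rfl

@[simp] lemma inv_carrier (s : ExelS G) :
    s⁻¹.carrier = s.carrier.image (s.elt⁻¹ * ·) := rfl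

@[simp] lemma inv_elt (s : ExelS G) : s⁻¹.elt = s.elt⁻¹ := rfl

instance : Monoid (ExelS G) where
  mul_assoc a b c := by
    ext x
    · simp only [mul_carrier, Finset.image_union, Finset.image_image, Finset.union_assoc,
        Finset.mem_union, Finset.mem_image, Function.comp]
      constructor <;> rintro (h | h | ⟨y, hy, rfl⟩) <;> simp_all [mul_assoc]
    · simp [mul_assoc]
  one_mul s := by
    ext x
    · simp only [mul_carrier, one_carrier, one_elt, one_mul, Finset.image_id']
      constructor
      · intro h
        rcases Finset.mem_union.1 h with h | h
        · exact (Finset.mem_singleton.1 h) ▸ s.one_mem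
        · exact h
      · exact fun h => Finset.mem_union_right _ h
    · simp
  mul_one s := by
    ext x
    · simp only [mul_carrier, one_carrier, Finset.image_singleton, mul_one]
      constructor
      · intro h
        rcases Finset.mem_union.1 h with h | h
        · exact h
        · exact (Finset.mem_singleton.1 h) ▸ s.elt_mem
      · exact fun h => Finset.mem_union_left _ h
    · simp

/-- The canonical generators `[g]` of Exel's monoid. -/
def br (g : G) : ExelS G := ⟨{1, g}, g, by simp, by simp⟩

/-- The idempotents `e_g = [g][g⁻¹]`. -/
def eIdem (g : G) : ExelS G := br g * (br g⁻¹ : ExelS G)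

end ExelS

open ExelS MonoidAlgebra in
/-- Let `M` be a `K_par(G)`-module and `d : G → M` satisfy
`e_g·d(gh) = [g]·d(h) + e_{gh}·d(g)` for all `g, h`.  Then `d(1) = 0`,
`d(g) = -[g]·d(g⁻¹)` and hence `d(g) = e_g·d(g)` for all `g ∈ G`. -/
theorem partialCocycle_basic_identities
    {G : Type*} [Group G] [DecidableEq G] {K : Type*} [CommRing K]
    {M : Type*} [AddCommGroup M] [Module (MonoidAlgebra K (ExelS G)) M]
    (d : G → M)
    (hd : ∀ g h : G,
      of K (ExelS G) (eIdem g) • d (g * h) =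
        of K (ExelS G) (br g) • d h + of K (ExelS G) (eIdem (g * h)) • d g) :
    d 1 = 0 ∧ (∀ g : G, d g = -(of K (ExelS G) (br g) • d g⁻¹)) ∧
      ∀ g : G, d g = of K (ExelS G) (eIdem g) • d g := by
  have br_one : (br 1 : ExelS G) = 1 := by
    ext x <;> simp [br]
  have e_one : (eIdem 1 : ExelS G) = 1 := by
    simp [eIdem, br_one]
  have hd1 : d 1 = 0 := by
    have h := hd (1 : G) 1
    rw [one_mul, br_one, e_one] at h
    simp only [map_one, one_smul] at h
    exact left_eq_add.mp h
  have hneg : ∀ g : G, d g = -(of K (ExelS G) (br g) • d g⁻¹) := by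
    intro g
    have h := hd g g⁻¹
    rw [mul_inv_cancel, hd1, smul_zero, e_one, map_one, one_smul] at h
    exact eq_neg_of_add_eq_zero_right h.symm
  refine ⟨hd1, hneg, fun g => ?_⟩
  calc d g = -(of K (ExelS G) (br g) • d g⁻¹) := hneg g
    _ = -(of K (ExelS G) (br g) • (-(of K (ExelS G) (br g⁻¹) • d g⁻¹⁻¹))) := by
        rw [← hneg g⁻¹]
    _ = of K (ExelS G) (br g) • of K (ExelS G) (br g⁻¹) • d g := by
        rw [inv_inv, smul_neg, neg_neg]
    _ = of K (ExelS G) (eIdem g) • d g := by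
        rw [eIdem, map_mul, mul_smul]
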